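/- Let α₁, α₂, β, δ, γ be positive real numbers. There exist rank-one orthogonal projections P₁, Q, R on ℂ² (with its standard inner product) such that the family {P₁, Q, R} is irreducible and α₁·P₁ + α₂·I + β·Q + δ·R = γ·I, if and only if α₁ + α₂ < γ, α₂ + β < γ, α₂ + δ < γ, and α₁ + 2α₂ + β + δ = 2γ. (This describes all weights with which the unique indecomposable representation of the primitive poset (2,1,1) with dimension vector (1,2;1;1;2) can be unitarized; here the second member P₂ of the chain has rank 2, i.e., P₂ = I.) -/

import Mathlib

open scoped InnerProductSpace

set_option maxHeartbeats 1600000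

noncomputable section

/-- An orthogonal projection on `ℂⁿ` (with its standard inner product): a symmetric
idempotent linear operator. -/
def IsOrthProj {n : ℕ}
    (p : EuclideanSpace ℂ (Fin n) →ₗ[ℂ] EuclideanSpace ℂ (Fin n)) : Prop :=
  p.IsSymmetric ∧ p ∘ₗ p = p

/-- For orthogonal projections, `p ≤ q` means `pq = qp = p`. -/
def ProjLE {n : ℕ}
    (p q : EuclideanSpace ℂ (Fin n) →ₗ[ℂ] EuclideanSpace ℂ (Fin n)) : Prop :=
  q ∘ₗ p = p ∧ p ∘ₗ q = p

/-- A family of operators on `ℂⁿ` is irreducible if the only subspaces invariant under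
every member of the family are `{0}` and `ℂⁿ`. -/
def IrreducibleFamily {n : ℕ}
    (T : Set (EuclideanSpace ℂ (Fin n) →ₗ[ℂ] EuclideanSpace ℂ (Fin n))) : Prop :=
  ∀ W : Submodule ℂ (EuclideanSpace ℂ (Fin n)),
    (∀ f ∈ T, W.map f ≤ W) → W = ⊥ ∨ W = ⊤

namespace Unitarization211

abbrev E2 := EuclideanSpace ℂ (Fin 2)

/-! ### Rank-one projections -/

def projL (u : E2) : E2 →ₗ[ℂ] E2 where
  toFun v := ⟪u, v⟫_ℂ • u
  map_add' x y := by simp [inner_add_right, add_smul]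
  map_smul' c x := by simp [inner_smul_right, smul_smul]

lemma projL_apply (u v : E2) : projL u v = ⟪u, v⟫_ℂ • u := rfl

lemma projL_symm (u : E2) : (projL u).IsSymmetric := by
  intro x y
  simp only [projL_apply, inner_smul_left, inner_smul_right, ← inner_conj_symm u x]
  simp [mul_comm]

lemma projL_idem (u : E2) (hu : ⟪u, u⟫_ℂ = 1) : projL u ∘ₗ projL u = projL u := by
  ext v
  have hu' : (‖u‖:ℂ)^2 = 1 := by simpa using hu
  simp [projL_apply, inner_smul_right, hu, hu', smul_smul, mul_comm]

lemma projL_range (u : E2) (hu : ⟪u, u⟫_ℂ = 1) :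
    LinearMap.range (projL u) = Submodule.span ℂ {u} := by
  apply le_antisymm
  · rintro x ⟨v, rfl⟩
    exact Submodule.smul_mem _ _ (Submodule.mem_span_singleton_self u)
  · rw [Submodule.span_singleton_le_iff_mem]
    have hu' : (‖u‖:ℂ)^2 = 1 := by simpa using hu
    exact ⟨u, by simp [projL_apply, hu, hu']⟩

lemma projL_finrank (u : E2) (hu : ⟪u, u⟫_ℂ = 1) :
    Module.finrank ℂ (LinearMap.range (projL u)) = 1 := by
  rw [projL_range u hu]
  have hu0 : u ≠ 0 := by rintro rfl; simp at hu
  exact finrank_span_singleton hu0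

lemma inner_E2 (x y : E2) :
    ⟪x, y⟫_ℂ = (starRingEnd ℂ) (x 0) * y 0 + (starRingEnd ℂ) (x 1) * y 1 := by
  rw [PiLp.inner_apply, Fin.sum_univ_two]; simp [mul_comm]

lemma E2_ext (x y : E2) (h0 : x 0 = y 0) (h1 : x 1 = y 1) : x = y := by
  ext i; fin_cases i <;> assumption

/-! ### Forward direction: key strict inequality -/

lemma key_lt (A B C : E2 →ₗ[ℂ] E2) (hA : IsOrthProj A) (hB : IsOrthProj B) (hC : IsOrthProj C)
    (x y z w : ℝ) (hy : 0 < y) (hz : 0 < z)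
    (hrA : Module.finrank ℂ (LinearMap.range A) = 1)
    (hirr : ∀ W : Submodule ℂ E2, W.map A ≤ W → W.map B ≤ W → W.map C ≤ W → W = ⊥ ∨ W = ⊤)
    (heq : (x:ℂ) • A + (y:ℂ) • B + (z:ℂ) • C = (w:ℂ) • LinearMap.id) :
    x < w := by
  have hA0 : A ≠ 0 := by
    rintro rfl
    rw [LinearMap.range_zero] at hrA
    simp at hrA
  obtain ⟨v, hv⟩ : ∃ v, A v ≠ 0 := by
    by_contra h
    push_neg at h
    exact hA0 (LinearMap.ext fun v => h v)
  set u := A v with hu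
  have hAu : A u = u := by
    have := LinearMap.ext_iff.1 hA.2 v
    simpa [hu] using this
  have hu0 : u ≠ 0 := hv
  have hBu : ⟪u, B u⟫_ℂ = (‖B u‖:ℂ)^2 := by
    have h1 : B (B u) = B u := LinearMap.ext_iff.1 hB.2 u
    calc ⟪u, B u⟫_ℂ = ⟪u, B (B u)⟫_ℂ := by rw [h1]
    _ = ⟪B u, B u⟫_ℂ := (hB.1 u (B u)).symm
    _ = (‖B u‖:ℂ)^2 := inner_self_eq_norm_sq_to_K (B u)
  have hCu : ⟪u, C u⟫_ℂ = (‖C u‖:ℂ)^2 := by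
    have h1 : C (C u) = C u := LinearMap.ext_iff.1 hC.2 u
    calc ⟪u, C u⟫_ℂ = ⟪u, C (C u)⟫_ℂ := by rw [h1]
    _ = ⟪C u, C u⟫_ℂ := (hC.1 u (C u)).symm
    _ = (‖C u‖:ℂ)^2 := inner_self_eq_norm_sq_to_K (C u)
  have happ : (x:ℂ) • A u + (y:ℂ) • B u + (z:ℂ) • C u = (w:ℂ) • u := by
    have := LinearMap.ext_iff.1 heq u
    simpa using this
  have hinner : (x:ℂ) * (‖u‖:ℂ)^2 + (y:ℂ) * (‖B u‖:ℂ)^2 + (z:ℂ) * (‖C u‖:ℂ)^2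
      = (w:ℂ) * (‖u‖:ℂ)^2 := by
    have h := congrArg (fun t => ⟪u, t⟫_ℂ) happ
    simp only [inner_add_right, inner_smul_right] at h
    rw [hAu, hBu, hCu, inner_self_eq_norm_sq_to_K] at h
    exact h
  have hreal : x * ‖u‖^2 + y * ‖B u‖^2 + z * ‖C u‖^2 = w * ‖u‖^2 := by
    exact_mod_cast hinner
  have hun : 0 < ‖u‖ := norm_pos_iff.2 hu0
  have hle : x ≤ w := by
    nlinarith [mul_nonneg hy.le (sq_nonneg ‖B u‖), mul_nonneg hz.le (sq_nonneg ‖C u‖),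
      pow_pos hun 2]
  rcases lt_or_eq_of_le hle with h | h
  · exact h
  exfalso
  subst h
  have hB0 : B u = 0 := by
    have h2 : ‖B u‖^2 = 0 := by
      nlinarith [mul_nonneg hy.le (sq_nonneg ‖B u‖), mul_nonneg hz.le (sq_nonneg ‖C u‖)]
    exact norm_eq_zero.1 (sq_eq_zero_iff.1 h2)
  have hC0 : C u = 0 := by
    have h2 : ‖C u‖^2 = 0 := by
      nlinarith [mul_nonneg hy.le (sq_nonneg ‖B u‖), mul_nonneg hz.le (sq_nonneg ‖C u‖)]
    exact norm_eq_zero.1 (sq_eq_zero_iff.1 h2)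
  set W : Submodule ℂ E2 := Submodule.span ℂ {u} with hW
  have inv : ∀ (f : E2 →ₗ[ℂ] E2), f u ∈ W → W.map f ≤ W := by
    intro f hf
    rw [Submodule.map_le_iff_le_comap, hW, Submodule.span_le]
    intro t ht
    rcases ht with rfl
    exact hf
  have h1 : W.map A ≤ W := inv A (by rw [hAu]; exact Submodule.mem_span_singleton_self u)
  have h2 : W.map B ≤ W := inv B (by rw [hB0]; exact W.zero_mem)
  have h3 : W.map C ≤ W := inv C (by rw [hC0]; exact W.zero_mem)
  rcases hirr W h1 h2 h3 with h | h
  · exact hu0 (by simpa [hW, Submodule.span_singleton_eq_bot] using h)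
  · have hfr : Module.finrank ℂ W = 1 := finrank_span_singleton hu0
    rw [h] at hfr
    have h2 : Module.finrank ℂ (⊤ : Submodule ℂ E2) = 2 := by simp [finrank_top]
    omega

/-- Trace of a symmetric idempotent of rank one is 1. -/
lemma trace_proj (P : E2 →ₗ[ℂ] E2) (hP : P ∘ₗ P = P)
    (hr : Module.finrank ℂ (LinearMap.range P) = 1) :
    LinearMap.trace ℂ E2 P = 1 := by
  have hproj : LinearMap.IsProj (LinearMap.range P) P := by
    refine ⟨fun x => ⟨x, rfl⟩, ?_⟩
    rintro x ⟨y, rfl⟩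
    exact LinearMap.ext_iff.1 hP y
  rw [hproj.trace, hr]
  norm_num

/-! ### Backward direction: scalar data -/

lemma scalars_exist (a b d c : ℝ) (ha : 0 < a) (hb : 0 < b) (hd : 0 < d)
    (h1 : a < c) (h2 : b < c) (h3 : d < c) (h4 : a + b + d = 2 * c) :
    ∃ q1 q2 r1 r2 : ℝ, q1 ^ 2 + q2 ^ 2 = 1 ∧ r1 ^ 2 + r2 ^ 2 = 1 ∧
      a + b * q1 ^ 2 + d * r1 ^ 2 = c ∧ b * q2 ^ 2 + d * r2 ^ 2 = c ∧
      b * (q1 * q2) + d * (r1 * r2) = 0 ∧ 0 < q1 ∧ 0 < q2 := by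
  set s : ℝ := (d ^ 2 - b ^ 2 - a ^ 2) / (2 * a) with hs_def
  have hs : 2 * a * s = d ^ 2 - b ^ 2 - a ^ 2 := by
    rw [hs_def]; field_simp
  have tA : a < b + d := by linarith
  have tB : b < a + d := by linarith
  have tC : d < a + b := by linarith
  have hbs1 : 0 < b + s := by nlinarith [mul_pos (sub_pos.2 tB) (sub_pos.2 tA)]
  have hbs2 : 0 < b - s := by nlinarith [mul_pos (sub_pos.2 tC) (by positivity : (0:ℝ) < a + b + d)]
  have hds1 : 0 < d - a - s := by nlinarith [mul_pos (sub_pos.2 tC) (sub_pos.2 tA)]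
  have hds2 : 0 < d + a + s := by nlinarith [mul_pos (sub_pos.2 tB) (by positivity : (0:ℝ) < a + b + d)]
  refine ⟨Real.sqrt ((b + s) / (2 * b)), Real.sqrt ((b - s) / (2 * b)),
    Real.sqrt ((d - a - s) / (2 * d)), -Real.sqrt ((d + a + s) / (2 * d)), ?_, ?_, ?_, ?_, ?_, ?_, ?_⟩
  case _ =>
    rw [Real.sq_sqrt (by positivity), Real.sq_sqrt (by positivity)]
    field_simp
    ring
  case _ =>
    rw [neg_pow, Real.sq_sqrt (by positivity), Real.sq_sqrt (by positivity)]
    field_simp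
    ring
  case _ =>
    rw [Real.sq_sqrt (by positivity), Real.sq_sqrt (by positivity)]
    field_simp
    linear_combination h4
  case _ =>
    rw [neg_pow, Real.sq_sqrt (by positivity), Real.sq_sqrt (by positivity)]
    field_simp
    linear_combination h4
  case _ =>
    have e1 : Real.sqrt ((b + s) / (2 * b)) * Real.sqrt ((b - s) / (2 * b))
        = Real.sqrt (b ^ 2 - s ^ 2) / (2 * b) := by
      rw [← Real.sqrt_mul (by positivity)]
      have harg : (b + s) / (2 * b) * ((b - s) / (2 * b)) = (b ^ 2 - s ^ 2) / (2 * b) ^ 2 := by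
        field_simp; ring
      rw [harg, Real.sqrt_div' _ (by positivity), Real.sqrt_sq (by positivity)]
    have e2 : Real.sqrt ((d - a - s) / (2 * d)) * -Real.sqrt ((d + a + s) / (2 * d))
        = -(Real.sqrt (b ^ 2 - s ^ 2) / (2 * d)) := by
      rw [mul_neg, ← Real.sqrt_mul (by positivity)]
      have harg : (d - a - s) / (2 * d) * ((d + a + s) / (2 * d))
          = (b ^ 2 - s ^ 2) / (2 * d) ^ 2 := by
        rw [div_mul_div_comm]
        congr 1
        · linear_combination -hs
        · ring
      rw [harg, Real.sqrt_div' _ (by positivity), Real.sqrt_sq (by positivity)]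
    rw [e1, e2]
    field_simp
    ring
  case _ => exact Real.sqrt_pos.2 (by positivity)
  case _ => exact Real.sqrt_pos.2 (by positivity)

end Unitarization211

open Unitarization211 in
/-- The weights with which the unique indecomposable representation of the primitive poset
`(2,1,1)` with dimension vector `(1,2;1;1;2)` can be unitarized (the second chain member
`P₂` has rank 2, i.e. `P₂ = I`): irreducible systems with
`α₁P₁ + α₂I + βQ + δR = γI` exist iff `α₁+α₂ < γ`, `α₂+β < γ`, `α₂+δ < γ`,
`α₁+2α₂+β+δ = 2γ`. -/
theorem unitarization_211_dim2 (α₁ α₂ β δ γ : ℝ)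
    (hα₁ : 0 < α₁) (hα₂ : 0 < α₂) (hβ : 0 < β) (hδ : 0 < δ) (hγ : 0 < γ) :
    (∃ P₁ Q R : EuclideanSpace ℂ (Fin 2) →ₗ[ℂ] EuclideanSpace ℂ (Fin 2),
        IsOrthProj P₁ ∧ IsOrthProj Q ∧ IsOrthProj R ∧
        Module.finrank ℂ (LinearMap.range P₁) = 1 ∧
        Module.finrank ℂ (LinearMap.range Q) = 1 ∧
        Module.finrank ℂ (LinearMap.range R) = 1 ∧
        IrreducibleFamily {P₁, Q, R} ∧
        (α₁ : ℂ) • P₁ + (α₂ : ℂ) • (LinearMap.id : EuclideanSpace ℂ (Fin 2) →ₗ[ℂ] _)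
            + (β : ℂ) • Q + (δ : ℂ) • R
          = (γ : ℂ) • (LinearMap.id : EuclideanSpace ℂ (Fin 2) →ₗ[ℂ] _)) ↔
      (α₁ + α₂ < γ ∧ α₂ + β < γ ∧ α₂ + δ < γ ∧ α₁ + 2 * α₂ + β + δ = 2 * γ) := by
  constructor
  · rintro ⟨P₁, Q, R, hP, hQ, hR, hrP, hrQ, hrR, hirr, heq⟩
    -- trace identity
    have htr : α₁ + 2 * α₂ + β + δ = 2 * γ := by
      have ht := congrArg (LinearMap.trace ℂ E2) heq
      have h2 : LinearMap.trace ℂ E2 LinearMap.id = 2 := by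
        rw [LinearMap.trace_id]
        norm_num
      rw [map_add, map_add, map_add, map_smul, map_smul, map_smul, map_smul, map_smul,
        trace_proj P₁ hP.2 hrP, trace_proj Q hQ.2 hrQ, trace_proj R hR.2 hrR, h2] at ht
      have ht' : (α₁:ℂ) + α₂ * 2 + β + δ = γ * 2 := by simpa using ht
      have : α₁ + α₂ * 2 + β + δ = γ * 2 := by exact_mod_cast ht'
      linarith
    -- rearranged equation
    have hc : ((γ - α₂ : ℝ) : ℂ) = (γ:ℂ) - (α₂:ℂ) := by push_cast; ring
    have h' : (α₁:ℂ) • P₁ + (β:ℂ) • Q + (δ:ℂ) • R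
        = ((γ - α₂ : ℝ):ℂ) • (LinearMap.id : E2 →ₗ[ℂ] E2) := by
      rw [hc, sub_smul, ← heq]; abel
    have hirr1 : ∀ W : Submodule ℂ E2,
        W.map P₁ ≤ W → W.map Q ≤ W → W.map R ≤ W → W = ⊥ ∨ W = ⊤ := by
      intro W h1 h2 h3
      apply hirr W
      intro f hf
      rcases hf with rfl | rfl | rfl
      exacts [h1, h2, h3]
    have k1 : α₁ < γ - α₂ := key_lt P₁ Q R hP hQ hR α₁ β δ (γ - α₂) hβ hδ hrP hirr1 h'
    have k2 : β < γ - α₂ := by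
      refine key_lt Q P₁ R hQ hP hR β α₁ δ (γ - α₂) hα₁ hδ hrQ
        (fun W h1 h2 h3 => hirr1 W h2 h1 h3) ?_
      rw [← h']; abel
    have k3 : δ < γ - α₂ := by
      refine key_lt R P₁ Q hR hP hQ δ α₁ β (γ - α₂) hα₁ hβ hrR
        (fun W h1 h2 h3 => hirr1 W h2 h3 h1) ?_
      rw [← h']; abel
    exact ⟨by linarith, by linarith, by linarith, htr⟩
  · rintro ⟨h1, h2, h3, h4⟩
    obtain ⟨q1, q2, r1, r2, U1, U2, I1, I2, I3, hq1, hq2⟩ :=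
      scalars_exist α₁ β δ (γ - α₂) hα₁ hβ hδ (by linarith) (by linarith) (by linarith)
        (by linarith)
    set e : E2 := !₂[1, 0] with he
    set f : E2 := !₂[0, 1] with hf
    set q : E2 := !₂[(q1:ℂ), (q2:ℂ)] with hq
    set r : E2 := !₂[(r1:ℂ), (r2:ℂ)] with hr
    have hee : ⟪e, e⟫_ℂ = 1 := by rw [inner_E2]; simp [he]
    have hqq : ⟪q, q⟫_ℂ = 1 := by
      rw [inner_E2]
      have hU : ((q1^2 + q2^2 : ℝ) : ℂ) = 1 := by rw [U1]; norm_num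
      push_cast at hU
      simp [hq, Complex.conj_ofReal]
      linear_combination hU
    have hrr : ⟪r, r⟫_ℂ = 1 := by
      rw [inner_E2]
      have hU : ((r1^2 + r2^2 : ℝ) : ℂ) = 1 := by rw [U2]; norm_num
      push_cast at hU
      simp [hr, Complex.conj_ofReal]
      linear_combination hU
    refine ⟨projL e, projL q, projL r,
      ⟨projL_symm e, projL_idem e hee⟩,
      ⟨projL_symm q, projL_idem q hqq⟩,
      ⟨projL_symm r, projL_idem r hrr⟩,
      projL_finrank e hee, projL_finrank q hqq, projL_finrank r hrr, ?_, ?_⟩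
    · -- irreducibility
      intro W hW
      have hWe : W.map (projL e) ≤ W := hW (projL e) (Set.mem_insert _ _)
      have hWq : W.map (projL q) ≤ W :=
        hW (projL q) (Set.mem_insert_of_mem _ (Set.mem_insert _ _))
      by_cases hbot : W = ⊥
      · exact Or.inl hbot
      right
      obtain ⟨w, hwW, hw0⟩ := Submodule.ne_bot_iff W |>.1 hbot
      have hq1' : (q1:ℂ) ≠ 0 := by exact_mod_cast hq1.ne'
      have hq2' : (q2:ℂ) ≠ 0 := by exact_mod_cast hq2.ne'
      have smul_cancel : ∀ (c : ℂ) (x : E2), c ≠ 0 → c • x ∈ W → x ∈ W := by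
        intro c x hc hcx
        have := W.smul_mem c⁻¹ hcx
        rwa [smul_smul, inv_mul_cancel₀ hc, one_smul] at this
      have hqmem_of : ∀ x ∈ W, ⟪q, x⟫_ℂ ≠ 0 → q ∈ W := by
        intro x hx hin
        have hmem : projL q x ∈ W := hWq ⟨x, hx, rfl⟩
        rw [projL_apply] at hmem
        exact smul_cancel _ _ hin hmem
      have key : e ∈ W ∧ f ∈ W := by
        have main : q ∈ W → e ∈ W ∧ f ∈ W := by
          intro hqW
          by_cases h0 : w 0 = 0
          · have hw1 : w 1 ≠ 0 := by
              intro hw1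
              exact hw0 (E2_ext w 0 h0 hw1)
            have hfW : f ∈ W := by
              have hwf : w = (w 1) • f := by
                apply E2_ext <;> simp [hf, h0]
              rw [hwf] at hwW
              exact smul_cancel _ _ hw1 hwW
            refine ⟨?_, hfW⟩
            have hid : e = (q1:ℂ)⁻¹ • (q - (q2:ℂ) • f) := by
              apply E2_ext <;> simp [he, hf, hq] <;> field_simp [hq1', hq2']
            rw [hid]
            exact W.smul_mem _ (W.sub_mem hqW (W.smul_mem _ hfW))
          · have heW : e ∈ W := by
              have hmem : projL e w ∈ W := hWe ⟨w, hwW, rfl⟩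
              rw [projL_apply] at hmem
              have hin : ⟪e, w⟫_ℂ = w 0 := by simp [inner_E2, he]
              rw [hin] at hmem
              exact smul_cancel _ _ h0 hmem
            refine ⟨heW, ?_⟩
            have hid : f = (q2:ℂ)⁻¹ • (q - (q1:ℂ) • e) := by
              apply E2_ext <;> simp [he, hf, hq] <;> field_simp [hq1', hq2']
            rw [hid]
            exact W.smul_mem _ (W.sub_mem hqW (W.smul_mem _ heW))
        apply main
        by_cases h0 : w 0 = 0
        · have hw1 : w 1 ≠ 0 := fun hw1 => hw0 (E2_ext w 0 h0 hw1)
          apply hqmem_of w hwW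
          rw [inner_E2]
          simp [hq, h0, Complex.conj_ofReal]
          exact ⟨by exact_mod_cast hq2.ne', hw1⟩
        · have heW : e ∈ W := by
            have hmem : projL e w ∈ W := hWe ⟨w, hwW, rfl⟩
            rw [projL_apply] at hmem
            have hin : ⟪e, w⟫_ℂ = w 0 := by simp [inner_E2, he]
            rw [hin] at hmem
            exact smul_cancel _ _ h0 hmem
          apply hqmem_of e heW
          rw [inner_E2]
          simp [hq, he, Complex.conj_ofReal]
          exact_mod_cast hq1.ne'
      rw [Submodule.eq_top_iff']
      intro v
      have hv : v = v 0 • e + v 1 • f := by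
        apply E2_ext <;> simp [he, hf]
      rw [hv]
      exact W.add_mem (W.smul_mem _ key.1) (W.smul_mem _ key.2)
    · -- the equation
      have I1c : (α₁:ℂ) + (β:ℂ) * (q1:ℂ)^2 + (δ:ℂ) * (r1:ℂ)^2 = (γ:ℂ) - (α₂:ℂ) := by
        exact_mod_cast congrArg (fun t : ℝ => (t:ℂ)) I1
      have I2c : (β:ℂ) * (q2:ℂ)^2 + (δ:ℂ) * (r2:ℂ)^2 = (γ:ℂ) - (α₂:ℂ) := by
        exact_mod_cast congrArg (fun t : ℝ => (t:ℂ)) I2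
      have I3c : (β:ℂ) * ((q1:ℂ) * (q2:ℂ)) + (δ:ℂ) * ((r1:ℂ) * (r2:ℂ)) = 0 := by
        exact_mod_cast congrArg (fun t : ℝ => (t:ℂ)) I3
      apply LinearMap.ext; intro v
      apply E2_ext <;>
        simp [projL_apply, inner_E2, he, hq, hr, Complex.conj_ofReal] <;> ring_nf
      · linear_combination (v 0) * I1c + (v 1) * I3c
      · linear_combination (v 1) * I2c + (v 0) * I3c
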